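/- Let G be a finite subgroup of GL(V) such that the subspace V^G of G-fixed vectors has dimension 1, and let f be a nonzero homogeneous G-invariant polynomial function on V. If f vanishes at some (equivalently, every) nonzero vector v of V^G, then v is a singular point of the projective hypersurface Z(f): all partial derivatives of f vanish at v. -/

import Mathlib

noncomputable section
open MvPolynomial Matrix

lemma chainRule {n : ℕ} (s : Fin n → MvPolynomial (Fin n) ℂ) (f : MvPolynomial (Fin n) ℂ)
    (k : Fin n) :
    pderiv k (aeval s f) = ∑ j, aeval s (pderiv j f) * pderiv k (s j) := by
  induction f using MvPolynomial.induction_on with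
  | C a => simp
  | add p q hp hq =>
      simp only [map_add, hp, hq, add_mul, ← Finset.sum_add_distrib]
  | mul_X p j hp =>
      classical
      rw [_root_.map_mul, aeval_X, pderiv_mul, hp]
      have hrhs : ∀ i : Fin n, aeval s (pderiv i (p * (X j : MvPolynomial (Fin n) ℂ)))
            * pderiv k (s i)
          = aeval s (pderiv i p) * pderiv k (s i) * s j
            + aeval s p * (aeval s (pderiv i (X j : MvPolynomial (Fin n) ℂ)) * pderiv k (s i)) := by
        intro i
        rw [pderiv_mul, map_add, _root_.map_mul, _root_.map_mul, aeval_X]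
        ring
      rw [Finset.sum_congr rfl (fun i _ => hrhs i), Finset.sum_add_distrib, ← Finset.sum_mul,
        ← Finset.mul_sum]
      congr 1
      rw [Finset.sum_eq_single j]
      · simp
      · intro i _ hij
        simp [pderiv_X_of_ne (Ne.symm hij)]
      · simp

lemma eulerMono {n : ℕ} (d : Fin n →₀ ℕ) (a : ℂ) (v : Fin n → ℂ) :
    ∑ i, v i * eval v (pderiv i (monomial d a)) = (d.degree : ℂ) * eval v (monomial d a) := by
  classical
  have key : ∀ i : Fin n, v i * eval v (pderiv i (monomial d a))
      = (d i : ℂ) * eval v (monomial d a) := by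
    intro i
    rcases Nat.eq_zero_or_pos (d i) with h | h
    · simp [pderiv_monomial, h]
    · rw [pderiv_monomial, eval_monomial, eval_monomial, Finsupp.prod_pow, Finsupp.prod_pow]
      set d' : Fin n →₀ ℕ := d - Finsupp.single i 1 with hd'
      have h1 : ∏ j, v j ^ d' j
          = v i ^ (d i - 1) * ∏ j ∈ Finset.univ.erase i, v j ^ d j := by
        rw [← Finset.mul_prod_erase Finset.univ _ (Finset.mem_univ i)]
        congr 1
        · simp [hd', Finsupp.single_apply]
        · apply Finset.prod_congr rfl
          intro j hj
          have hji : j ≠ i := Finset.ne_of_mem_erase hj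
          simp [hd', Finsupp.single_apply, Ne.symm hji]
      have h2 : v i * ∏ j, v j ^ d' j = ∏ j, v j ^ d j := by
        rw [h1, ← Finset.mul_prod_erase Finset.univ (fun j => v j ^ d j) (Finset.mem_univ i),
          ← mul_assoc, ← pow_succ', Nat.sub_add_cancel h]
      calc v i * (a * ↑(d i) * ∏ j, v j ^ d' j)
          = (d i : ℂ) * (a * (v i * ∏ j, v j ^ d' j)) := by ring
        _ = (d i : ℂ) * (a * ∏ j, v j ^ d j) := by rw [h2]
  rw [Finset.sum_congr rfl (fun i _ => key i), ← Finset.sum_mul]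
  congr 1
  have hdeg : d.degree = ∑ i, d i := by
    rw [Finsupp.degree]
    exact Finset.sum_subset (Finset.subset_univ _)
      (fun x _ hx => by simpa using Finsupp.notMem_support_iff.mp hx)
  rw [hdeg, Nat.cast_sum]

lemma euler {n e : ℕ} (f : MvPolynomial (Fin n) ℂ) (hf : f.IsHomogeneous e) (v : Fin n → ℂ) :
    ∑ i, v i * eval v (pderiv i f) = (e : ℂ) * eval v f := by
  conv_lhs => rw [f.as_sum]
  conv_rhs => rw [f.as_sum]
  simp only [map_sum, Finset.mul_sum]
  rw [Finset.sum_comm]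
  apply Finset.sum_congr rfl
  intro d hd
  rw [eulerMono]
  congr 1
  have := hf (mem_support_iff.mp hd)
  rw [Finsupp.degree_eq_weight_one]; exact congrArg (Nat.cast : ℕ → ℂ) this

lemma evalAeval {n : ℕ} (w : Fin n → ℂ) (s : Fin n → MvPolynomial (Fin n) ℂ)
    (f : MvPolynomial (Fin n) ℂ) :
    eval w (aeval s f) = eval (fun j => eval w (s j)) f := by
  induction f using MvPolynomial.induction_on with
  | C a => simp
  | add p q hp hq => rw [map_add, map_add, hp, hq, map_add]
  | mul_X p j hp => rw [_root_.map_mul, _root_.map_mul, aeval_X, eval_mul, eval_X, hp]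

/-- The subspace of vectors fixed by every element of a set of invertible matrices. -/
def fixedSpace {n : ℕ} (S : Set (GL (Fin n) ℂ)) : Submodule ℂ (Fin n → ℂ) where
  carrier := {v | ∀ g ∈ S, (g : Matrix (Fin n) (Fin n) ℂ).mulVec v = v}
  add_mem' := by
    intro a b ha hb g hg
    rw [Matrix.mulVec_add, ha g hg, hb g hg]
  zero_mem' := by
    intro g hg
    simp
  smul_mem' := by
    intro c a ha g hg
    rw [Matrix.mulVec_smul, ha g hg]

theorem stmt_2 {n e : ℕ} (G : Subgroup (GL (Fin n) ℂ)) (hG : Finite G)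
    (hdim : Module.finrank ℂ (fixedSpace (G : Set (GL (Fin n) ℂ))) = 1)
    (f : MvPolynomial (Fin n) ℂ) (hf0 : f ≠ 0) (hhom : f.IsHomogeneous e)
    (hinv : ∀ g ∈ G, ∀ w : Fin n → ℂ,
      MvPolynomial.eval ((g : Matrix (Fin n) (Fin n) ℂ).mulVec w) f = MvPolynomial.eval w f)
    (v : Fin n → ℂ) (hv : v ∈ fixedSpace (G : Set (GL (Fin n) ℂ))) (hv0 : v ≠ 0)
    (hfv : MvPolynomial.eval v f = 0) :
    ∀ i, MvPolynomial.eval v (pderiv i f) = 0 := by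
  classical
  haveI : Fintype G := Fintype.ofFinite G
  set u : Fin n → ℂ := fun i => eval v (pderiv i f) with hu
  -- invariance of the gradient at the fixed point
  have hstepA : ∀ g ∈ G, Matrix.vecMul u (g : Matrix (Fin n) (Fin n) ℂ) = u := by
    intro g hg
    funext k'
    set A := (g : Matrix (Fin n) (Fin n) ℂ) with hA
    set s : Fin n → MvPolynomial (Fin n) ℂ := fun j => ∑ i, C (A j i) * X i with hs
    have hsw : ∀ w : Fin n → ℂ, (fun j => eval w (s j)) = A.mulVec w := by
      intro w; funext j; simp [hs, Matrix.mulVec, dotProduct]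
    have hF : aeval s f = f := by
      apply MvPolynomial.funext
      intro w
      rw [evalAeval, hsw, hinv g hg]
    have hps : ∀ j, pderiv k' (s j) = C (A j k') := by
      intro j
      rw [hs, map_sum, Finset.sum_eq_single k']
      · simp
      · intro i _ hik
        simp [pderiv_X_of_ne hik]
      · simp
    have hev : ∀ p : MvPolynomial (Fin n) ℂ, eval v (aeval s p) = eval v p := by
      intro p; rw [evalAeval, hsw, hv g hg]
    have hchain := chainRule s f k'
    rw [hF] at hchain
    calc Matrix.vecMul u A k' = ∑ j, u j * A j k' := by
          simp [Matrix.vecMul, dotProduct]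
      _ = eval v (pderiv k' f) := by
          rw [hchain, map_sum]
          apply Finset.sum_congr rfl
          intro j _
          rw [eval_mul, hps j, eval_C, hev]
      _ = u k' := rfl
  -- Euler's identity at v
  have hEu : dotProduct u v = 0 := by
    have h := euler f hhom v
    rw [hfv, mul_zero] at h
    rw [dotProduct, ← h]
    exact Finset.sum_congr rfl fun i _ => mul_comm _ _
  -- the averaging projection
  have hcard : (Fintype.card G : ℂ) ≠ 0 := Nat.cast_ne_zero.mpr Fintype.card_ne_zero
  set c : ℂ := (Fintype.card G : ℂ)⁻¹ with hc
  set P : Matrix (Fin n) (Fin n) ℂ :=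
    c • ∑ g : G, ((g : GL (Fin n) ℂ) : Matrix (Fin n) (Fin n) ℂ) with hP
  have huP : Matrix.vecMul u P = u := by
    funext k'
    have h1 : Matrix.vecMul u P k'
        = c * ∑ g : G, Matrix.vecMul u ((g : GL (Fin n) ℂ) : Matrix (Fin n) (Fin n) ℂ) k' := by
      simp only [Matrix.vecMul, dotProduct, hP, Matrix.smul_apply, Matrix.sum_apply,
        smul_eq_mul, Finset.mul_sum]
      rw [Finset.sum_comm]
      apply Finset.sum_congr rfl
      intro g _
      apply Finset.sum_congr rfl
      intro j _
      ring
    rw [h1, Finset.sum_congr rfl (fun g _ => by rw [hstepA (g : GL (Fin n) ℂ) g.2])]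
    rw [Finset.sum_const, Finset.card_univ, nsmul_eq_mul, ← mul_assoc, hc,
      inv_mul_cancel₀ hcard, one_mul]
  have hPfix : ∀ w : Fin n → ℂ, P.mulVec w ∈ fixedSpace (G : Set (GL (Fin n) ℂ)) := by
    intro w h hh
    have hHP : (h : Matrix (Fin n) (Fin n) ℂ) * P = P := by
      rw [hP, Matrix.mul_smul, Finset.mul_sum]
      congr 1
      exact Fintype.sum_equiv (Equiv.mulLeft (⟨h, hh⟩ : G))
        (fun g => (h : Matrix (Fin n) (Fin n) ℂ) * ((g : GL (Fin n) ℂ) : Matrix (Fin n) (Fin n) ℂ))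
        (fun g => ((g : GL (Fin n) ℂ) : Matrix (Fin n) (Fin n) ℂ))
        (fun g => by simp [Units.val_mul])
    rw [Matrix.mulVec_mulVec, hHP]
  have hMspan : fixedSpace (G : Set (GL (Fin n) ℂ)) = Submodule.span ℂ {v} := by
    symm
    apply Submodule.eq_of_le_of_finrank_eq
    · exact Submodule.span_le.mpr (Set.singleton_subset_iff.mpr hv)
    · rw [finrank_span_singleton hv0, hdim]
  have hfin : ∀ w : Fin n → ℂ, dotProduct u w = 0 := by
    intro w
    obtain ⟨a, ha⟩ : ∃ a : ℂ, a • v = P.mulVec w := by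
      have hm := hPfix w
      rw [hMspan] at hm
      exact Submodule.mem_span_singleton.mp hm
    calc dotProduct u w = dotProduct (Matrix.vecMul u P) w := by rw [huP]
      _ = dotProduct u (P.mulVec w) := (dotProduct_mulVec u P w).symm
      _ = a * dotProduct u v := by rw [← ha, dotProduct_smul, smul_eq_mul]
      _ = 0 := by rw [hEu, mul_zero]
  intro i
  have := hfin (Pi.single i 1)
  rw [dotProduct_single, mul_one] at this
  exact this
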